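/- Let A have restricted isometry constants δ_q with 0 < δ_{2k} < 1 and δ_{3k} > 0. Let x^p ∈ ℝⁿ be k-sparse, u^p = x^p + Aᵀ(y − A x^p), let w^(1), …, w^(ω) ∈ P^k be successive compression minimizers at x^p (ω ≥ 1 an integer), and let x^{p+1} = H_k(u^p ⊗ w^(1) ⊗ ⋯ ⊗ w^(ω)), i.e., a k-sparse vector minimizing ‖u^p ⊗ w^(1) ⊗ ⋯ ⊗ w^(ω) − d‖₂ over k-sparse d (this is the iterate of the ROTω algorithm). Then ‖x^{p+1} − x_S‖₂ ≤ ρ̃·‖x^p − x_S‖₂ + c₁·‖Aᵀν'‖₂ + c₂·‖ν'‖₂, where ρ̃ = (δ_{2k} + 2ω·δ_{3k})·√((1+δ_k)/(1−δ_{2k})) + δ_{3k}, α* = 2δ_{3k}/(2ω·δ_{3k} + δ_{2k}), c₁ = ((2ω−1)/(1−α*))·√((1+δ_k)/(1−δ_{2k})) + 1, and c₂ = 2/((1−α*)·√(1−δ_{2k})). Moreover, if δ_{3k} < 1 and (2ω+1)·δ_{3k}·√((1+δ_{3k})/(1−δ_{3k})) + δ_{3k} < 1, then ρ̃ < 1.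 -/

import Mathlib

open Finset

noncomputable def nsq {ι : Type*} [Fintype ι] (x : ι → ℝ) : ℝ := ∑ i, (x i) ^ 2

noncomputable def n2 {ι : Type*} [Fintype ι] (x : ι → ℝ) : ℝ := Real.sqrt (nsq x)

noncomputable def supp {n : ℕ} (x : Fin n → ℝ) : Finset (Fin n) :=
  Finset.univ.filter (fun i => x i ≠ 0)

def Sparse {n : ℕ} (k : ℕ) (x : Fin n → ℝ) : Prop := (supp x).card ≤ k

def restr {n : ℕ} (x : Fin n → ℝ) (T : Finset (Fin n)) : Fin n → ℝ :=
  fun i => if i ∈ T then x i else 0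

def SatRIP {m n : ℕ} (A : Matrix (Fin m) (Fin n) ℝ) (q : ℕ) (δ : ℝ) : Prop :=
  ∀ z : Fin n → ℝ, Sparse q z →
    (1 - δ) * nsq z ≤ nsq (A.mulVec z) ∧ nsq (A.mulVec z) ≤ (1 + δ) * nsq z

/-- `δ` is the `q`-th order restricted isometry constant of `A`:
the smallest `δ' ≥ 0` such that `(1-δ')‖z‖² ≤ ‖Az‖² ≤ (1+δ')‖z‖²` for all `q`-sparse `z`. -/
def IsRIC {m n : ℕ} (A : Matrix (Fin m) (Fin n) ℝ) (q : ℕ) (δ : ℝ) : Prop :=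
  IsLeast {δ' : ℝ | 0 ≤ δ' ∧ SatRIP A q δ'} δ

/-- membership in `W^k`: binary vectors with exactly `k` entries equal to 1. -/
def InW {n : ℕ} (k : ℕ) (w : Fin n → ℝ) : Prop :=
  (∀ i, w i = 0 ∨ w i = 1) ∧ (Finset.univ.filter (fun i => w i = 1)).card = k

/-- membership in the polytope `P^k`. -/
def InP {n : ℕ} (k : ℕ) (w : Fin n → ℝ) : Prop :=
  (∑ i, w i) = (k : ℝ) ∧ ∀ i, 0 ≤ w i ∧ w i ≤ 1

/-- `S` is an index set of the `k` largest absolute entries of `x`. -/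
def IsTopK {n : ℕ} (x : Fin n → ℝ) (k : ℕ) (S : Finset (Fin n)) : Prop :=
  S.card = k ∧ ∀ i ∈ S, ∀ j ∉ S, |x j| ≤ |x i|

/-- `d` is a hard thresholding `H_k(z)` of `z`. -/
def IsHT {n : ℕ} (k : ℕ) (z d : Fin n → ℝ) : Prop :=
  Sparse k d ∧ ∀ d' : Fin n → ℝ, Sparse k d' → n2 (z - d) ≤ n2 (z - d')

/-- `w 0, …, w (ω-1)` are successive compression minimizers at `x^p` (with `u^p = up`). -/
def SCM {m n : ℕ} (A : Matrix (Fin m) (Fin n) ℝ) (y : Fin m → ℝ) (k ω : ℕ)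
    (up : Fin n → ℝ) (w : ℕ → Fin n → ℝ) : Prop :=
  ∀ j < ω, InP k (w j) ∧ ∀ v : Fin n → ℝ, InP k v →
    n2 (y - A.mulVec (up * (∏ l ∈ Finset.range j, w l) * w j)) ≤
    n2 (y - A.mulVec (up * (∏ l ∈ Finset.range j, w l) * v))

/-- the `ℓ∞` norm of `x` restricted to `T` (zero if `T` is empty). -/
noncomputable def linfT {n : ℕ} (x : Fin n → ℝ) (T : Finset (Fin n)) : ℝ :=
  if h : T.Nonempty then T.sup' h (fun j => |x j|) else 0

section basics
variable {ι : Type*} [Fintype ι]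

lemma nsq_nonneg (x : ι → ℝ) : 0 ≤ nsq x := Finset.sum_nonneg (fun i _ => sq_nonneg _)

lemma n2_nonneg (x : ι → ℝ) : 0 ≤ n2 x := Real.sqrt_nonneg _

lemma n2_sq (x : ι → ℝ) : n2 x ^ 2 = nsq x := Real.sq_sqrt (nsq_nonneg x)

lemma nsq_add (x y : ι → ℝ) :
    nsq (x + y) = nsq x + 2 * (∑ i, x i * y i) + nsq y := by
  unfold nsq
  rw [Finset.mul_sum, ← Finset.sum_add_distrib, ← Finset.sum_add_distrib]
  apply Finset.sum_congr rfl
  intro i _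
  simp only [Pi.add_apply]; ring

lemma dot_le_n2 (x y : ι → ℝ) : (∑ i, x i * y i) ≤ n2 x * n2 y := by
  have h := Finset.sum_mul_sq_le_sq_mul_sq Finset.univ x y
  have h2 : (∑ i, x i * y i) ≤ |∑ i, x i * y i| := le_abs_self _
  refine h2.trans ?_
  have : |∑ i, x i * y i| = Real.sqrt ((∑ i, x i * y i) ^ 2) := by
    rw [Real.sqrt_sq_eq_abs]
  rw [this, ← Real.sqrt_mul_self (mul_nonneg (n2_nonneg x) (n2_nonneg y))]
  apply Real.sqrt_le_sqrt
  calc (∑ i, x i * y i) ^ 2 ≤ nsq x * nsq y := h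
    _ = (n2 x * n2 y) * (n2 x * n2 y) := by
        rw [← n2_sq x, ← n2_sq y]; ring

lemma n2_add_le (x y : ι → ℝ) : n2 (x + y) ≤ n2 x + n2 y := by
  have h1 : nsq (x + y) ≤ (n2 x + n2 y) ^ 2 := by
    rw [nsq_add]
    have := dot_le_n2 x y
    rw [← n2_sq x, ← n2_sq y]; nlinarith [n2_nonneg x, n2_nonneg y]
  have := Real.sqrt_le_sqrt h1
  rwa [Real.sqrt_sq (add_nonneg (n2_nonneg x) (n2_nonneg y))] at this

lemma n2_mono {x y : ι → ℝ} (h : ∀ i, |x i| ≤ |y i|) : n2 x ≤ n2 y := by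
  apply Real.sqrt_le_sqrt
  apply Finset.sum_le_sum
  intro i _
  rw [← sq_abs (x i), ← sq_abs (y i)]
  exact pow_le_pow_left₀ (abs_nonneg _) (h i) 2

lemma n2_neg (x : ι → ℝ) : n2 (-x) = n2 x := by
  unfold n2 nsq; congr 1; apply Finset.sum_congr rfl; intro i _; simp

lemma n2_smul (c : ℝ) (x : ι → ℝ) : n2 (c • x) = |c| * n2 x := by
  unfold n2 nsq
  have : ∑ i, ((c • x) i) ^ 2 = c ^ 2 * ∑ i, (x i) ^ 2 := by
    rw [Finset.mul_sum]; apply Finset.sum_congr rfl; intro i _; simp [mul_pow]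
  rw [this, Real.sqrt_mul (sq_nonneg c), Real.sqrt_sq_eq_abs]

lemma n2_sub_le (x y z : ι → ℝ) : n2 (x - z) ≤ n2 (x - y) + n2 (y - z) := by
  have : x - z = (x - y) + (y - z) := by ring
  rw [this]; exact n2_add_le _ _

end basics

section suppstuff
variable {n : ℕ}

lemma supp_restr_subset (v : Fin n → ℝ) (T : Finset (Fin n)) : supp (restr v T) ⊆ T := by
  intro i hi
  have hi := (Finset.mem_filter.mp hi).2
  by_contra h
  exact hi (by simp [restr, h])

lemma sparse_restr {k : ℕ} (v : Fin n → ℝ) {T : Finset (Fin n)} (h : T.card ≤ k) :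
    Sparse k (restr v T) :=
  le_trans (Finset.card_le_card (supp_restr_subset v T)) h

lemma restr_add_compl (v : Fin n → ℝ) (T : Finset (Fin n)) :
    restr v T + restr v Tᶜ = v := by
  funext i
  simp only [Pi.add_apply, restr, Finset.mem_compl]
  by_cases h : i ∈ T <;> simp [h]

lemma restr_eq_of_supp_subset {v : Fin n → ℝ} {T : Finset (Fin n)} (h : supp v ⊆ T) :
    restr v T = v := by
  funext i
  simp only [restr]
  by_cases hi : i ∈ T
  · simp [hi]
  · simp only [hi, if_false]
    by_contra hne
    exact hi (h (by simp [supp, Ne.symm hne, (Ne.symm hne).symm]))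

lemma supp_sub_subset (a b : Fin n → ℝ) : supp (a - b) ⊆ supp a ∪ supp b := by
  intro i hi
  simp only [supp, Finset.mem_filter, Finset.mem_univ, true_and, Pi.sub_apply] at hi
  simp only [Finset.mem_union, supp, Finset.mem_filter, Finset.mem_univ, true_and]
  by_contra h
  push_neg at h
  rw [h.1, h.2] at hi; simp at hi

lemma sparse_mono {k k' : ℕ} (h : k ≤ k') {v : Fin n → ℝ} (hv : Sparse k v) : Sparse k' v :=
  le_trans hv h

lemma supp_smul_subset (c : ℝ) (v : Fin n → ℝ) : supp (c • v) ⊆ supp v := by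
  intro i hi
  simp only [supp, Finset.mem_filter, Finset.mem_univ, true_and, Pi.smul_apply,
    smul_eq_mul] at hi ⊢
  intro h; exact hi (by rw [h, mul_zero])

lemma supp_add_subset (a b : Fin n → ℝ) : supp (a + b) ⊆ supp a ∪ supp b := by
  have := supp_sub_subset a (-b)
  simpa [sub_neg_eq_add, supp] using this

lemma nsq_smul {ι : Type*} [Fintype ι] (c : ℝ) (x : ι → ℝ) : nsq (c • x) = c ^ 2 * nsq x := by
  unfold nsq
  rw [Finset.mul_sum]
  apply Finset.sum_congr rfl
  intro i _; simp [mul_pow]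

lemma n2_eq_zero_iff {ι : Type*} [Fintype ι] {x : ι → ℝ} : n2 x = 0 ↔ x = 0 := by
  constructor
  · intro h
    have h0 : nsq x = 0 := by
      have := n2_sq x
      rw [h] at this; simpa using this.symm
    funext i
    have := (Finset.sum_eq_zero_iff_of_nonneg (fun i _ => sq_nonneg (x i))).mp h0 i (by simp)
    exact pow_eq_zero_iff (by norm_num) |>.mp this
  · intro h; subst h
    unfold n2 nsq; simp

end suppstuff

section rip
variable {m n : ℕ} (A : Matrix (Fin m) (Fin n) ℝ)

lemma adj_dot (ν : Fin m → ℝ) (g : Fin n → ℝ) :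
    ∑ i, (A.transpose.mulVec ν) i * g i = ∑ j, ν j * (A.mulVec g) j := by
  show dotProduct (A.transpose.mulVec ν) g = dotProduct ν (A.mulVec g)
  rw [Matrix.mulVec_transpose, ← Matrix.dotProduct_mulVec]

lemma sat_upper {q : ℕ} {δ : ℝ} (hs : SatRIP A q δ) (hδ0 : 0 ≤ δ)
    {z : Fin n → ℝ} (hz : Sparse q z) :
    n2 (A.mulVec z) ≤ Real.sqrt (1 + δ) * n2 z := by
  unfold n2
  rw [← Real.sqrt_mul (by linarith)]
  exact Real.sqrt_le_sqrt (hs z hz).2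

lemma sat_lower {q : ℕ} {δ : ℝ} (hs : SatRIP A q δ)
    {z : Fin n → ℝ} (hz : Sparse q z) :
    Real.sqrt (1 - δ) * n2 z ≤ n2 (A.mulVec z) := by
  by_cases h : 0 ≤ 1 - δ
  · unfold n2
    rw [← Real.sqrt_mul h]
    exact Real.sqrt_le_sqrt (hs z hz).1
  · rw [Real.sqrt_eq_zero'.mpr (by linarith), zero_mul]
    exact n2_nonneg _

lemma rip_inner_half {q : ℕ} {δ : ℝ} (hs : SatRIP A q δ)
    {a b : Fin n → ℝ} (hab : (supp a ∪ supp b).card ≤ q) :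
    |(∑ j, (A.mulVec a) j * (A.mulVec b) j) - ∑ i, a i * b i| ≤ δ / 2 * (nsq a + nsq b) := by
  have hsp : Sparse q (a + b) := by
    refine le_trans (Finset.card_le_card ?_) hab
    exact supp_add_subset a b
  have hsm : Sparse q (a - b) := by
    refine le_trans (Finset.card_le_card ?_) hab
    exact supp_sub_subset a b
  have hup := (hs _ hsp).2
  have hlo := (hs _ hsm).1
  have hup2 := (hs _ hsm).2
  have hlo2 := (hs _ hsp).1
  have hAadd : A.mulVec (a + b) = A.mulVec a + A.mulVec b := Matrix.mulVec_add A a b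
  have hAsub : A.mulVec (a - b) = A.mulVec a - A.mulVec b := Matrix.mulVec_sub A a b
  have e1 : nsq (A.mulVec (a+b)) =
      nsq (A.mulVec a) + 2 * (∑ j, (A.mulVec a) j * (A.mulVec b) j) + nsq (A.mulVec b) := by
    rw [hAadd]; exact nsq_add _ _
  have e2 : nsq (A.mulVec (a-b)) =
      nsq (A.mulVec a) - 2 * (∑ j, (A.mulVec a) j * (A.mulVec b) j) + nsq (A.mulVec b) := by
    rw [hAsub, sub_eq_add_neg, nsq_add]
    have : ∀ j, (A.mulVec a) j * (-(A.mulVec b)) j = -((A.mulVec a) j * (A.mulVec b) j) := by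
      intro j; simp
    rw [Finset.sum_congr rfl (fun j _ => this j), Finset.sum_neg_distrib]
    have : nsq (-(A.mulVec b)) = nsq (A.mulVec b) := by
      unfold nsq; apply Finset.sum_congr rfl; intro i _; simp
    rw [this]; ring
  have f1 : nsq (a+b) = nsq a + 2 * (∑ i, a i * b i) + nsq b := nsq_add _ _
  have f2 : nsq (a-b) = nsq a - 2 * (∑ i, a i * b i) + nsq b := by
    rw [sub_eq_add_neg, nsq_add]
    have : ∀ i, a i * (-b) i = -(a i * b i) := by intro i; simp
    rw [Finset.sum_congr rfl (fun i _ => this i), Finset.sum_neg_distrib]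
    have : nsq (-b) = nsq b := by
      unfold nsq; apply Finset.sum_congr rfl; intro i _; simp
    rw [this]; ring
  rw [f1] at hup hlo2
  rw [f2] at hlo hup2
  rw [e1] at hup hlo2
  rw [e2] at hlo hup2
  rw [abs_le]
  constructor <;> nlinarith [hup, hlo, hup2, hlo2]

end rip

section rip2
variable {m n : ℕ} (A : Matrix (Fin m) (Fin n) ℝ)

lemma rip_inner {q : ℕ} {δ : ℝ} (hs : SatRIP A q δ) (hδ0 : 0 ≤ δ)
    {a b : Fin n → ℝ} (hab : (supp a ∪ supp b).card ≤ q) :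
    |(∑ j, (A.mulVec a) j * (A.mulVec b) j) - ∑ i, a i * b i| ≤ δ * (n2 a * n2 b) := by
  by_cases ha : a = 0
  · subst ha
    simp only [Matrix.mulVec_zero, Pi.zero_apply, zero_mul, Finset.sum_const_zero,
      sub_zero, abs_zero]
    exact mul_nonneg hδ0 (mul_nonneg (n2_nonneg _) (n2_nonneg _))
  by_cases hb : b = 0
  · subst hb
    simp only [Matrix.mulVec_zero, Pi.zero_apply, mul_zero, Finset.sum_const_zero,
      sub_zero, abs_zero]
    exact mul_nonneg hδ0 (mul_nonneg (n2_nonneg _) (n2_nonneg _))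
  have hna : n2 a ≠ 0 := fun h => ha (n2_eq_zero_iff.mp h)
  have hnb : n2 b ≠ 0 := fun h => hb (n2_eq_zero_iff.mp h)
  set a' : Fin n → ℝ := (n2 a)⁻¹ • a with ha'def
  set b' : Fin n → ℝ := (n2 b)⁻¹ • b with hb'def
  have hab' : (supp a' ∪ supp b').card ≤ q := by
    refine le_trans (Finset.card_le_card (Finset.union_subset_union ?_ ?_)) hab
    · exact supp_smul_subset _ _
    · exact supp_smul_subset _ _
  have half := rip_inner_half A hs hab'
  have hnsqa' : nsq a' = 1 := by
    rw [ha'def, nsq_smul, ← n2_sq]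
    field_simp
  have hnsqb' : nsq b' = 1 := by
    rw [hb'def, nsq_smul, ← n2_sq]
    field_simp
  rw [hnsqa', hnsqb'] at half
  have e1 : ∑ j, (A.mulVec a) j * (A.mulVec b) j
      = (n2 a * n2 b) * ∑ j, (A.mulVec a') j * (A.mulVec b') j := by
    have hAa : A.mulVec a = (n2 a) • A.mulVec a' := by
      rw [ha'def, Matrix.mulVec_smul, smul_smul, mul_inv_cancel₀ hna, one_smul]
    have hAb : A.mulVec b = (n2 b) • A.mulVec b' := by
      rw [hb'def, Matrix.mulVec_smul, smul_smul, mul_inv_cancel₀ hnb, one_smul]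
    rw [hAa, hAb, Finset.mul_sum]
    apply Finset.sum_congr rfl
    intro j _; simp [Pi.smul_apply, smul_eq_mul]; ring
  have e2 : ∑ i, a i * b i = (n2 a * n2 b) * ∑ i, a' i * b' i := by
    have haa : a = (n2 a) • a' := by
      rw [ha'def, smul_smul, mul_inv_cancel₀ hna, one_smul]
    have hbb : b = (n2 b) • b' := by
      rw [hb'def, smul_smul, mul_inv_cancel₀ hnb, one_smul]
    conv_lhs => rw [haa, hbb]
    rw [Finset.mul_sum]
    apply Finset.sum_congr rfl
    intro i _; simp [Pi.smul_apply, smul_eq_mul]; ring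
  rw [e1, e2, ← mul_sub, abs_mul]
  have hpos : 0 ≤ n2 a * n2 b := mul_nonneg (n2_nonneg a) (n2_nonneg b)
  rw [abs_of_nonneg hpos, mul_comm (δ) (n2 a * n2 b)]
  apply mul_le_mul_of_nonneg_left _ hpos
  calc |∑ j, (A.mulVec a') j * (A.mulVec b') j - ∑ i, a' i * b' i|
      ≤ δ / 2 * (1 + 1) := half
    _ = δ := by ring

lemma off_supp {q : ℕ} {δ : ℝ} (hs : SatRIP A q δ) (hδ0 : 0 ≤ δ)
    (E : Fin n → ℝ) (Ω : Finset (Fin n)) (hc : (Ω ∪ supp E).card ≤ q) :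
    n2 (restr (E - A.transpose.mulVec (A.mulVec E)) Ω) ≤ δ * n2 E := by
  set h : Fin n → ℝ := E - A.transpose.mulVec (A.mulVec E) with hdef
  set g : Fin n → ℝ := restr h Ω with gdef
  have hsupp : supp g ⊆ Ω := supp_restr_subset _ _
  have hcard : (supp g ∪ supp E).card ≤ q :=
    le_trans (Finset.card_le_card (Finset.union_subset_union hsupp (le_refl _))) hc
  have hgh : nsq g = ∑ i, g i * h i := by
    unfold nsq
    apply Finset.sum_congr rfl
    intro i _
    rw [gdef]
    simp only [restr]
    by_cases hi : i ∈ Ω <;> simp [hi, sq]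
  have hsplit : ∑ i, g i * h i = (∑ i, g i * E i) - ∑ j, (A.mulVec g) j * (A.mulVec E) j := by
    rw [hdef]
    have : ∀ i, g i * (E - A.transpose.mulVec (A.mulVec E)) i
        = g i * E i - g i * (A.transpose.mulVec (A.mulVec E)) i := by
      intro i; simp [Pi.sub_apply]; ring
    rw [Finset.sum_congr rfl (fun i _ => this i), Finset.sum_sub_distrib]
    congr 1
    have := adj_dot A (A.mulVec E) g
    rw [show ∑ i, g i * (A.transpose.mulVec (A.mulVec E)) i
        = ∑ i, (A.transpose.mulVec (A.mulVec E)) i * g i from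
      Finset.sum_congr rfl (fun i _ => mul_comm _ _), this]
    exact Finset.sum_congr rfl (fun j _ => mul_comm _ _)
  have hb : nsq g ≤ δ * (n2 g * n2 E) := by
    rw [hgh, hsplit]
    have := rip_inner A hs hδ0 hcard
    calc (∑ i, g i * E i) - ∑ j, (A.mulVec g) j * (A.mulVec E) j
        ≤ |(∑ j, (A.mulVec g) j * (A.mulVec E) j) - ∑ i, g i * E i| := by
          rw [abs_sub_comm]; exact le_abs_self _
      _ ≤ δ * (n2 g * n2 E) := this
  by_cases hg0 : n2 g = 0
  · rw [hg0]
    exact mul_nonneg hδ0 (n2_nonneg E)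
  · have hgpos : 0 < n2 g := lt_of_le_of_ne (n2_nonneg g) (Ne.symm hg0)
    have : n2 g * n2 g ≤ (δ * n2 E) * n2 g := by
      rw [← n2_sq] at hb
      calc n2 g * n2 g = n2 g ^ 2 := by ring
        _ ≤ δ * (n2 g * n2 E) := hb
        _ = (δ * n2 E) * n2 g := by ring
    exact le_of_mul_le_mul_right this hgpos

end rip2

section poly
variable {m n : ℕ} (A : Matrix (Fin m) (Fin n) ℝ) (d : Fin n → ℝ)

noncomputable def fA (v : Fin n → ℝ) : ℝ := n2 (A.mulVec (fun i => d i * v i))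

lemma fA_convex {a b : Fin n → ℝ} {lam mu : ℝ} (hl : 0 ≤ lam) (hm : 0 ≤ mu) :
    fA A d (fun i => lam * a i + mu * b i) ≤ lam * fA A d a + mu * fA A d b := by
  unfold fA
  have : (fun i => d i * (lam * a i + mu * b i))
      = lam • (fun i => d i * a i) + mu • (fun i => d i * b i) := by
    funext i; simp only [Pi.add_apply, Pi.smul_apply, smul_eq_mul]; ring
  rw [this, Matrix.mulVec_add, Matrix.mulVec_smul, Matrix.mulVec_smul]
  calc n2 (lam • A.mulVec (fun i => d i * a i) + mu • A.mulVec (fun i => d i * b i))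
      ≤ n2 (lam • A.mulVec (fun i => d i * a i)) + n2 (mu • A.mulVec (fun i => d i * b i)) :=
        n2_add_le _ _
    _ = lam * n2 (A.mulVec (fun i => d i * a i)) + mu * n2 (A.mulVec (fun i => d i * b i)) := by
        rw [n2_smul, n2_smul, abs_of_nonneg hl, abs_of_nonneg hm]

lemma binary_case {k : ℕ} {C : ℝ}
    (hC : ∀ T : Finset (Fin n), T.card ≤ k →
      n2 (A.mulVec (fun i => d i * (if i ∈ T then (1:ℝ) else 0))) ≤ C)
    (v : Fin n → ℝ) (hbin : ∀ i, v i = 0 ∨ v i = 1)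
    (hbox : ∀ i, 0 ≤ v i ∧ v i ≤ 1) (hsum : (∑ i, v i) ≤ (k : ℝ)) :
    n2 (A.mulVec (fun i => d i * v i)) ≤ C := by
  classical
  set T : Finset (Fin n) := Finset.univ.filter (fun i => v i = 1) with hT
  have hmemT : ∀ i, i ∈ T ↔ v i = 1 := by
    intro i; rw [hT]; simp
  have hcard : T.card ≤ k := by
    have h1 : (T.card : ℝ) = ∑ i ∈ T, v i := by
      rw [Finset.sum_congr rfl (fun i hi => ((hmemT i).mp hi : v i = 1))]
      simp
    have h2 : ∑ i ∈ T, v i ≤ ∑ i, v i := by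
      apply Finset.sum_le_sum_of_subset_of_nonneg (Finset.subset_univ T)
      intro i _ _; exact (hbox i).1
    have : (T.card : ℝ) ≤ (k : ℝ) := by rw [h1]; exact le_trans h2 hsum
    exact_mod_cast this
  have heq : (fun i => d i * v i) = (fun i => d i * (if i ∈ T then (1:ℝ) else 0)) := by
    funext i
    by_cases hiT : i ∈ T
    · rw [(hmemT i).mp hiT, if_pos hiT]
    · have hvi : v i = 0 := by
        rcases hbin i with h | h
        · exact h
        · exact absurd ((hmemT i).mpr h) hiT
      rw [hvi, if_neg hiT]
  rw [heq]
  exact hC T hcard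

lemma poly_bound {k : ℕ} {C : ℝ}
    (hC : ∀ T : Finset (Fin n), T.card ≤ k →
      n2 (A.mulVec (fun i => d i * (if i ∈ T then (1:ℝ) else 0))) ≤ C)
    (v : Fin n → ℝ) (hbox : ∀ i, 0 ≤ v i ∧ v i ≤ 1) (hsum : (∑ i, v i) ≤ (k : ℝ)) :
    n2 (A.mulVec (fun i => d i * v i)) ≤ C := by
  classical
  suffices H : ∀ (N : ℕ) (v : Fin n → ℝ),
      (Finset.univ.filter (fun i => v i ≠ 0 ∧ v i ≠ 1)).card ≤ N →
      (∀ i, 0 ≤ v i ∧ v i ≤ 1) → (∑ i, v i) ≤ (k : ℝ) →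
      n2 (A.mulVec (fun i => d i * v i)) ≤ C by
    exact H _ v le_rfl hbox hsum
  intro N
  induction N with
  | zero =>
    intro v hcard hbox hsum
    apply binary_case A d hC v _ hbox hsum
    intro i
    by_contra hcon
    push_neg at hcon
    have : i ∈ Finset.univ.filter (fun i => v i ≠ 0 ∧ v i ≠ 1) := by
      simp [hcon.1, hcon.2]
    rw [Finset.card_eq_zero.mp (Nat.le_zero.mp hcard)] at this
    simp at this
  | succ N ih =>
    intro v hcard hbox hsum
    set F : Finset (Fin n) := Finset.univ.filter (fun i => v i ≠ 0 ∧ v i ≠ 1) with hF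
    have hmemF : ∀ i, i ∈ F ↔ (v i ≠ 0 ∧ v i ≠ 1) := by
      intro i; rw [hF]; simp
    by_cases hFc : F.card ≤ N
    · exact ih v hFc hbox hsum
    have hFne : F.Nonempty := by
      rw [← Finset.card_pos]; omega
    obtain ⟨i₀, hi₀⟩ := hFne
    have hfrac : ∀ i ∈ F, 0 < v i ∧ v i < 1 := by
      intro i hi
      rw [hmemF i] at hi
      exact ⟨lt_of_le_of_ne (hbox i).1 (Ne.symm hi.1), lt_of_le_of_ne (hbox i).2 hi.2⟩
    have hsub_card : ∀ (a : Fin n → ℝ) (i' : Fin n), i' ∈ F →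
        (Finset.univ.filter (fun i => a i ≠ 0 ∧ a i ≠ 1)) ⊆ F.erase i' →
        (Finset.univ.filter (fun i => a i ≠ 0 ∧ a i ≠ 1)).card ≤ N := by
      intro a i' hi' hss
      have := Finset.card_le_card hss
      have h2 := Finset.card_erase_lt_of_mem hi'
      omega
    -- generic two-point move helper
    have hkey : ∀ (a : Fin n → ℝ), (∀ i, 0 ≤ a i ∧ a i ≤ 1) → (∑ i, a i) ≤ (k:ℝ) →
        (∃ i' ∈ F, (Finset.univ.filter (fun i => a i ≠ 0 ∧ a i ≠ 1)) ⊆ F.erase i') →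
        fA A d a ≤ C := by
      rintro a hb hsa ⟨i', hi', hss⟩
      exact ih a (hsub_card a i' hi' hss) hb hsa
    by_cases hsingle : ∃ j₀ ∈ F, j₀ ≠ i₀
    · obtain ⟨j₀, hj₀, hne⟩ := hsingle
      obtain ⟨hv0i, hv1i⟩ := hfrac i₀ hi₀
      obtain ⟨hv0j, hv1j⟩ := hfrac j₀ hj₀
      set tp : ℝ := min (v i₀) (1 - v j₀) with htp
      set tm : ℝ := min (1 - v i₀) (v j₀) with htm
      have htp0 : 0 < tp := lt_min hv0i (by linarith)
      have htm0 : 0 < tm := lt_min (by linarith) hv0j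
      have htpi : tp ≤ v i₀ := min_le_left _ _
      have htpj : tp ≤ 1 - v j₀ := min_le_right _ _
      have htmi : tm ≤ 1 - v i₀ := min_le_left _ _
      have htmj : tm ≤ v j₀ := min_le_right _ _
      set a : Fin n → ℝ :=
        fun i => if i = i₀ then v i₀ - tp else if i = j₀ then v j₀ + tp else v i with ha
      set b : Fin n → ℝ :=
        fun i => if i = i₀ then v i₀ + tm else if i = j₀ then v j₀ - tm else v i with hb
      have hai : a i₀ = v i₀ - tp := by rw [ha]; simp
      have haj : a j₀ = v j₀ + tp := by rw [ha]; simp [hne]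
      have hao : ∀ i, i ≠ i₀ → i ≠ j₀ → a i = v i := by
        intro i h1 h2; rw [ha]; simp [h1, h2]
      have hbi : b i₀ = v i₀ + tm := by rw [hb]; simp
      have hbj : b j₀ = v j₀ - tm := by rw [hb]; simp [hne]
      have hbo : ∀ i, i ≠ i₀ → i ≠ j₀ → b i = v i := by
        intro i h1 h2; rw [hb]; simp [h1, h2]
      have hspos : (0:ℝ) < tp + tm := by linarith
      set lam : ℝ := tm / (tp + tm) with hlam
      set mu : ℝ := tp / (tp + tm) with hmu
      have hlm : lam + mu = 1 := by
        rw [hlam, hmu, ← add_div]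
        rw [show tm + tp = tp + tm by ring]
        exact div_self (ne_of_gt hspos)
      have hl0 : 0 ≤ lam := div_nonneg (le_of_lt htm0) (le_of_lt hspos)
      have hm0 : 0 ≤ mu := div_nonneg (le_of_lt htp0) (le_of_lt hspos)
      have hveq : v = fun i => lam * a i + mu * b i := by
        funext i
        by_cases h1 : i = i₀
        · subst h1
          rw [hai, hbi, hlam, hmu]
          field_simp
          ring
        · by_cases h2 : i = j₀
          · subst h2
            rw [haj, hbj, hlam, hmu]
            field_simp
            ring
          · rw [hao i h1 h2, hbo i h1 h2, ← add_mul, hlm, one_mul]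
      have hboxa : ∀ i, 0 ≤ a i ∧ a i ≤ 1 := by
        intro i
        by_cases h1 : i = i₀
        · subst h1; rw [hai]; constructor <;> linarith
        · by_cases h2 : i = j₀
          · subst h2; rw [haj]; constructor <;> linarith
          · rw [hao i h1 h2]; exact hbox i
      have hboxb : ∀ i, 0 ≤ b i ∧ b i ≤ 1 := by
        intro i
        by_cases h1 : i = i₀
        · subst h1; rw [hbi]; constructor <;> linarith
        · by_cases h2 : i = j₀
          · subst h2; rw [hbj]; constructor <;> linarith
          · rw [hbo i h1 h2]; exact hbox i
      have hsum_diff : ∀ (c : Fin n → ℝ) (s : ℝ), (c i₀ - v i₀ = -s) → (c j₀ - v j₀ = s) →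
          (∀ i, i ≠ i₀ → i ≠ j₀ → c i = v i) → (∑ i, c i) = ∑ i, v i := by
        intro c s hci hcj hother
        have hz : ∑ i, (c i - v i) = 0 := by
          rw [← Finset.sum_subset (Finset.subset_univ {i₀, j₀}) (by
            intro i _ hi
            simp only [Finset.mem_insert, Finset.mem_singleton] at hi
            push_neg at hi
            rw [hother i hi.1 hi.2]; ring)]
          rw [Finset.sum_pair (Ne.symm hne)]
          rw [hci, hcj]; ring
        have h2 : ∑ i, (c i - v i) = (∑ i, c i) - ∑ i, v i := Finset.sum_sub_distrib _ _
        rw [h2] at hz; linarith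
      have hsuma : (∑ i, a i) ≤ (k : ℝ) := by
        rw [hsum_diff a tp (by rw [hai]; ring) (by rw [haj]; ring) hao]
        exact hsum
      have hsumb : (∑ i, b i) ≤ (k : ℝ) := by
        rw [hsum_diff b (-tm) (by rw [hbi]; ring) (by rw [hbj]; ring) hbo]
        exact hsum
      have hfa : fA A d a ≤ C := by
        apply hkey a hboxa hsuma
        rcases le_or_gt (v i₀) (1 - v j₀) with hc | hc
        · refine ⟨i₀, hi₀, ?_⟩
          intro i hi
          simp only [Finset.mem_filter, Finset.mem_univ, true_and] at hi
          have hii : i ≠ i₀ := by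
            intro h; subst h
            rw [hai, htp, min_eq_left hc] at hi
            exact hi.1 (by ring)
          rw [Finset.mem_erase]
          refine ⟨hii, ?_⟩
          by_cases hij : i = j₀
          · subst hij; exact hj₀
          · rw [hmemF i]; rw [hao i hii hij] at hi; exact hi
        · refine ⟨j₀, hj₀, ?_⟩
          intro i hi
          simp only [Finset.mem_filter, Finset.mem_univ, true_and] at hi
          have hij : i ≠ j₀ := by
            intro h; subst h
            rw [haj, htp, min_eq_right (le_of_lt hc)] at hi
            exact hi.2 (by ring)
          rw [Finset.mem_erase]
          refine ⟨hij, ?_⟩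
          by_cases hii : i = i₀
          · subst hii; exact hi₀
          · rw [hmemF i]; rw [hao i hii hij] at hi; exact hi
      have hfb : fA A d b ≤ C := by
        apply hkey b hboxb hsumb
        rcases le_or_gt (1 - v i₀) (v j₀) with hc | hc
        · refine ⟨i₀, hi₀, ?_⟩
          intro i hi
          simp only [Finset.mem_filter, Finset.mem_univ, true_and] at hi
          have hii : i ≠ i₀ := by
            intro h; subst h
            rw [hbi, htm, min_eq_left hc] at hi
            exact hi.2 (by ring)
          rw [Finset.mem_erase]
          refine ⟨hii, ?_⟩
          by_cases hij : i = j₀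
          · subst hij; exact hj₀
          · rw [hmemF i]; rw [hbo i hii hij] at hi; exact hi
        · refine ⟨j₀, hj₀, ?_⟩
          intro i hi
          simp only [Finset.mem_filter, Finset.mem_univ, true_and] at hi
          have hij : i ≠ j₀ := by
            intro h; subst h
            rw [hbj, htm, min_eq_right (le_of_lt hc)] at hi
            exact hi.1 (by ring)
          rw [Finset.mem_erase]
          refine ⟨hij, ?_⟩
          by_cases hii : i = i₀
          · subst hii; exact hi₀
          · rw [hmemF i]; rw [hbo i hii hij] at hi; exact hi
      calc n2 (A.mulVec (fun i => d i * v i))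
          = fA A d (fun i => lam * a i + mu * b i) := by rw [← hveq]; rfl
        _ ≤ lam * fA A d a + mu * fA A d b := fA_convex A d hl0 hm0
        _ ≤ lam * C + mu * C := add_le_add
            (mul_le_mul_of_nonneg_left hfa hl0) (mul_le_mul_of_nonneg_left hfb hm0)
        _ = C := by rw [← add_mul, hlm, one_mul]
    · push_neg at hsingle
      obtain ⟨hv0i, hv1i⟩ := hfrac i₀ hi₀
      set a : Fin n → ℝ := fun i => if i = i₀ then 0 else v i with ha
      set b : Fin n → ℝ := fun i => if i = i₀ then 1 else v i with hb
      have hai : a i₀ = 0 := by rw [ha]; simp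
      have hao : ∀ i, i ≠ i₀ → a i = v i := by
        intro i h1; rw [ha]; simp [h1]
      have hbi : b i₀ = 1 := by rw [hb]; simp
      have hbo : ∀ i, i ≠ i₀ → b i = v i := by
        intro i h1; rw [hb]; simp [h1]
      have hbinother : ∀ i, i ≠ i₀ → v i = 0 ∨ v i = 1 := by
        intro i hi
        by_contra hcon
        push_neg at hcon
        exact hi (hsingle i ((hmemF i).mpr ⟨hcon.1, hcon.2⟩))
      have hveq : v = fun i => (1 - v i₀) * a i + (v i₀) * b i := by
        funext i
        by_cases h1 : i = i₀
        · subst h1; rw [hai, hbi]; ring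
        · rw [hao i h1, hbo i h1]; ring
      have hboxa : ∀ i, 0 ≤ a i ∧ a i ≤ 1 := by
        intro i
        by_cases h1 : i = i₀
        · subst h1; rw [hai]; norm_num
        · rw [hao i h1]; exact hbox i
      have hboxb : ∀ i, 0 ≤ b i ∧ b i ≤ 1 := by
        intro i
        by_cases h1 : i = i₀
        · subst h1; rw [hbi]; norm_num
        · rw [hbo i h1]; exact hbox i
      have hrest : ∑ i ∈ Finset.univ.erase i₀, v i = (∑ i, v i) - v i₀ := by
        rw [← Finset.add_sum_erase Finset.univ v (Finset.mem_univ i₀)]; ring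
      have hsuma_eq : ∑ i, a i = ∑ i ∈ Finset.univ.erase i₀, v i := by
        rw [← Finset.add_sum_erase Finset.univ a (Finset.mem_univ i₀), hai, zero_add]
        exact Finset.sum_congr rfl (fun i hi => hao i (Finset.ne_of_mem_erase hi))
      have hsumb_eq : ∑ i, b i = 1 + ∑ i ∈ Finset.univ.erase i₀, v i := by
        rw [← Finset.add_sum_erase Finset.univ b (Finset.mem_univ i₀), hbi]
        congr 1
        exact Finset.sum_congr rfl (fun i hi => hbo i (Finset.ne_of_mem_erase hi))
      have hsuma : (∑ i, a i) ≤ (k : ℝ) := by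
        rw [hsuma_eq, hrest]; linarith
      set T1 : Finset (Fin n) := (Finset.univ.erase i₀).filter (fun i => v i = 1) with hT1
      have hsum_rest : ∑ i ∈ Finset.univ.erase i₀, v i = (T1.card : ℝ) := by
        rw [hT1, Finset.card_filter]
        push_cast
        apply Finset.sum_congr rfl
        intro i hi
        rcases hbinother i (Finset.ne_of_mem_erase hi) with h | h
        · rw [h]; simp [h]
        · rw [h]; simp [h]
      have hT1k : T1.card + 1 ≤ k := by
        have h1 : (T1.card : ℝ) < (k : ℝ) := by
          rw [← hsum_rest, hrest]; linarith
        have : T1.card < k := by exact_mod_cast h1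
        omega
      have hsumb : (∑ i, b i) ≤ (k : ℝ) := by
        rw [hsumb_eq, hsum_rest]
        have : ((T1.card + 1 : ℕ) : ℝ) ≤ (k : ℝ) := by exact_mod_cast hT1k
        push_cast at this
        linarith
      have hssa : (Finset.univ.filter (fun i => a i ≠ 0 ∧ a i ≠ 1)) ⊆ F.erase i₀ := by
        intro i hi
        simp only [Finset.mem_filter, Finset.mem_univ, true_and] at hi
        have hii : i ≠ i₀ := by
          intro h; subst h; rw [hai] at hi; exact hi.1 rfl
        rw [Finset.mem_erase]
        exact ⟨hii, (hmemF i).mpr (by rw [hao i hii] at hi; exact hi)⟩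
      have hssb : (Finset.univ.filter (fun i => b i ≠ 0 ∧ b i ≠ 1)) ⊆ F.erase i₀ := by
        intro i hi
        simp only [Finset.mem_filter, Finset.mem_univ, true_and] at hi
        have hii : i ≠ i₀ := by
          intro h; subst h; rw [hbi] at hi; exact hi.2 rfl
        rw [Finset.mem_erase]
        exact ⟨hii, (hmemF i).mpr (by rw [hbo i hii] at hi; exact hi)⟩
      have hfa : fA A d a ≤ C := hkey a hboxa hsuma ⟨i₀, hi₀, hssa⟩
      have hfb : fA A d b ≤ C := hkey b hboxb hsumb ⟨i₀, hi₀, hssb⟩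
      have hl0 : (0:ℝ) ≤ 1 - v i₀ := by linarith
      have hm0 : (0:ℝ) ≤ v i₀ := le_of_lt hv0i
      calc n2 (A.mulVec (fun i => d i * v i))
          = fA A d (fun i => (1 - v i₀) * a i + (v i₀) * b i) := by rw [← hveq]; rfl
        _ ≤ (1 - v i₀) * fA A d a + (v i₀) * fA A d b := fA_convex A d hl0 hm0
        _ ≤ (1 - v i₀) * C + (v i₀) * C := add_le_add
            (mul_le_mul_of_nonneg_left hfa hl0) (mul_le_mul_of_nonneg_left hfb hm0)
        _ = C := by ring

end poly

section misc
variable {n : ℕ}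

lemma restr_add (a b : Fin n → ℝ) (T : Finset (Fin n)) :
    restr (a + b) T = restr a T + restr b T := by
  funext i
  simp only [restr, Pi.add_apply]
  by_cases h : i ∈ T <;> simp [h]

lemma n2_restr_le (v : Fin n → ℝ) (T : Finset (Fin n)) : n2 (restr v T) ≤ n2 v := by
  apply n2_mono
  intro i
  simp only [restr]
  by_cases h : i ∈ T <;> simp [h, abs_nonneg]

lemma nsq_restr (v : Fin n → ℝ) (T : Finset (Fin n)) :
    nsq (restr v T) = ∑ i ∈ T, (v i) ^ 2 := by
  unfold nsq
  rw [Finset.sum_congr rfl (fun i _ => show (restr v T i)^2 = if i ∈ T then (v i)^2 else 0 by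
    simp only [restr]; by_cases h : i ∈ T <;> simp [h])]
  rw [Finset.sum_ite_mem, Finset.univ_inter]

lemma sub_restr_eq (z : Fin n → ℝ) (T : Finset (Fin n)) :
    z - restr z T = restr z Tᶜ := by
  funext i
  simp only [Pi.sub_apply, restr, Finset.mem_compl]
  by_cases h : i ∈ T <;> simp [h]

lemma ric_nonneg {m : ℕ} {A : Matrix (Fin m) (Fin n) ℝ} {q : ℕ} {δ : ℝ}
    (h : IsRIC A q δ) : 0 ≤ δ := h.1.1

lemma ric_sat {m : ℕ} {A : Matrix (Fin m) (Fin n) ℝ} {q : ℕ} {δ : ℝ}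
    (h : IsRIC A q δ) : SatRIP A q δ := h.1.2

lemma ric_mono {m : ℕ} {A : Matrix (Fin m) (Fin n) ℝ} {q q' : ℕ} {δ δ' : ℝ}
    (hq : q ≤ q') (h : IsRIC A q δ) (h' : IsRIC A q' δ') : δ ≤ δ' := by
  apply h.2
  refine ⟨ric_nonneg h', ?_⟩
  intro z hz
  exact ric_sat h' z (sparse_mono hq hz)

end misc


set_option maxHeartbeats 2000000 in
theorem stmt10
    {m n : ℕ} (A : Matrix (Fin m) (Fin n) ℝ)
    (x : Fin n → ℝ) (ν y : Fin m → ℝ) (hy : y = A.mulVec x + ν)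
    (k : ℕ) (hk : 0 < k)
    (S : Finset (Fin n)) (hS : IsTopK x k S)
    (ν' : Fin m → ℝ) (hν' : ν' = A.mulVec (restr x Sᶜ) + ν)
    (ω : ℕ) (hω : 1 ≤ ω)
    (δk δ2k δ3k : ℝ) (hδk : IsRIC A k δk) (hδ2k : IsRIC A (2 * k) δ2k)
    (hδ3k : IsRIC A (3 * k) δ3k)
    (hδ2kpos : 0 < δ2k) (hδ2klt : δ2k < 1) (hδ3kpos : 0 < δ3k)
    (xp : Fin n → ℝ) (hxp : Sparse k xp)
    (up : Fin n → ℝ) (hup : up = xp + A.transpose.mulVec (y - A.mulVec xp))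
    (w : ℕ → Fin n → ℝ) (hw : SCM A y k ω up w)
    (xq : Fin n → ℝ) (hxq : IsHT k (up * ∏ l ∈ Finset.range ω, w l) xq) :
    n2 (xq - restr x S)
        ≤ ((δ2k + 2 * (ω : ℝ) * δ3k) * Real.sqrt ((1 + δk) / (1 - δ2k)) + δ3k)
              * n2 (xp - restr x S)
          + ((2 * (ω : ℝ) - 1) / (1 - 2 * δ3k / (2 * (ω : ℝ) * δ3k + δ2k))
              * Real.sqrt ((1 + δk) / (1 - δ2k)) + 1) * n2 (A.transpose.mulVec ν')
          + (2 / ((1 - 2 * δ3k / (2 * (ω : ℝ) * δ3k + δ2k)) * Real.sqrt (1 - δ2k)))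
              * n2 ν'
      ∧ (δ3k < 1 →
          (2 * (ω : ℝ) + 1) * δ3k * Real.sqrt ((1 + δ3k) / (1 - δ3k)) + δ3k < 1 →
          (δ2k + 2 * (ω : ℝ) * δ3k) * Real.sqrt ((1 + δk) / (1 - δ2k)) + δ3k < 1) := by
  classical
  have hδk0 : 0 ≤ δk := ric_nonneg hδk
  have hδ2k0 : 0 ≤ δ2k := ric_nonneg hδ2k
  have hδ3k0 : 0 ≤ δ3k := ric_nonneg hδ3k
  have hsatk : SatRIP A k δk := ric_sat hδk
  have hsat2 : SatRIP A (2*k) δ2k := ric_sat hδ2k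
  have hsat3 : SatRIP A (3*k) δ3k := ric_sat hδ3k
  have h23 : δ2k ≤ δ3k := ric_mono (by omega) hδ2k hδ3k
  have h13 : δk ≤ δ3k := ric_mono (by omega) hδk hδ3k
  set xS : Fin n → ℝ := restr x S with hxS
  set E : Fin n → ℝ := xp - xS with hE
  set η : Fin n → ℝ := up - xS with hηd
  set P : ℝ := n2 E with hP
  set Q : ℝ := n2 (A.transpose.mulVec ν') with hQ
  set R : ℝ := n2 ν' with hR
  have hP0 : 0 ≤ P := n2_nonneg _
  have hQ0 : 0 ≤ Q := n2_nonneg _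
  have hR0 : 0 ≤ R := n2_nonneg _
  set s1 : ℝ := Real.sqrt (1 + δk) with hs1
  set s2 : ℝ := Real.sqrt (1 - δ2k) with hs2
  have hs10 : 0 ≤ s1 := Real.sqrt_nonneg _
  have hs2pos : 0 < s2 := Real.sqrt_pos.mpr (by linarith)
  set c : ℝ := (ω : ℝ) with hc
  have hc1 : 1 ≤ c := by rw [hc]; exact_mod_cast hω
  have hyS : y = A.mulVec xS + ν' := by
    have hxsplit : A.mulVec x = A.mulVec xS + A.mulVec (restr x Sᶜ) := by
      rw [← Matrix.mulVec_add, hxS, restr_add_compl]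
    rw [hy, hν', hxsplit]
    abel
  have hηeq : η = (E - A.transpose.mulVec (A.mulVec E)) + A.transpose.mulVec ν' := by
    rw [hηd, hup, hyS, hE]
    simp only [Matrix.mulVec_sub, Matrix.mulVec_add]
    abel
  have hsuppE : supp E ⊆ S ∪ supp xp := by
    rw [hE]
    refine le_trans (supp_sub_subset xp xS) ?_
    intro i hi
    rcases Finset.mem_union.mp hi with h | h
    · exact Finset.mem_union_right _ h
    · exact Finset.mem_union_left _ (supp_restr_subset x S h)
  have hB : ∀ (Ω : Finset (Fin n)) (q : ℕ) (δ : ℝ), SatRIP A q δ → 0 ≤ δ →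
      (Ω ∪ (S ∪ supp xp)).card ≤ q → n2 (restr η Ω) ≤ δ * P + Q := by
    intro Ω q δ hsat hδ0 hcard
    have hcard' : (Ω ∪ supp E).card ≤ q := by
      refine le_trans (Finset.card_le_card ?_) hcard
      exact Finset.union_subset_union (le_refl _) hsuppE
    have hsplit : restr η Ω = restr (E - A.transpose.mulVec (A.mulVec E)) Ω
        + restr (A.transpose.mulVec ν') Ω := by
      rw [← restr_add, ← hηeq]
    rw [hsplit]
    refine le_trans (n2_add_le _ _) ?_
    apply add_le_add
    · exact off_supp A hsat hδ0 E Ω hcard'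
    · exact n2_restr_le _ _
  have hB2S : n2 (restr η S) ≤ δ2k * P + Q := by
    apply hB S (2*k) δ2k hsat2 hδ2k0
    have : S ∪ (S ∪ supp xp) = S ∪ supp xp := by
      rw [← Finset.union_assoc, Finset.union_self]
    rw [this]
    calc (S ∪ supp xp).card ≤ S.card + (supp xp).card := Finset.card_union_le _ _
      _ ≤ 2 * k := by rw [hS.1]; have := hxp; unfold Sparse at this; omega
  have hB3 : ∀ Ω : Finset (Fin n), Ω.card ≤ k → n2 (restr η Ω) ≤ δ3k * P + Q := by
    intro Ω hΩ
    apply hB Ω (3*k) δ3k hsat3 hδ3k0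
    calc (Ω ∪ (S ∪ supp xp)).card ≤ Ω.card + (S ∪ supp xp).card := Finset.card_union_le _ _
      _ ≤ Ω.card + (S.card + (supp xp).card) := by
          have := Finset.card_union_le S (supp xp); omega
      _ ≤ 3 * k := by rw [hS.1]; have := hxp; unfold Sparse at this; omega
  set G1 : ℝ := s1 * (δ3k * P + Q) with hG1d
  have hG10 : 0 ≤ G1 := mul_nonneg hs10 (by positivity)
  have hW01 : ∀ J : ℕ, J ≤ ω → ∀ i, 0 ≤ (∏ l ∈ Finset.range J, w l) i ∧
      (∏ l ∈ Finset.range J, w l) i ≤ 1 := by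
    intro J hJ i
    rw [Finset.prod_apply]
    constructor
    · apply Finset.prod_nonneg
      intro l hl
      exact ((hw l (lt_of_lt_of_le (Finset.mem_range.mp hl) hJ)).1.2 i).1
    · apply Finset.prod_le_one
      · intro l hl
        exact ((hw l (lt_of_lt_of_le (Finset.mem_range.mp hl) hJ)).1.2 i).1
      · intro l hl
        exact ((hw l (lt_of_lt_of_le (Finset.mem_range.mp hl) hJ)).1.2 i).2
  have hWsum : ∀ J : ℕ, 1 ≤ J → J ≤ ω → (∑ i, (∏ l ∈ Finset.range J, w l) i) ≤ (k : ℝ) := by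
    intro J h1 h2
    have hpt : ∀ i, (∏ l ∈ Finset.range J, w l) i ≤ w 0 i := by
      intro i
      rw [Finset.prod_apply]
      have h0mem : (0:ℕ) ∈ Finset.range J := Finset.mem_range.mpr (by omega)
      rw [← Finset.prod_erase_mul (Finset.range J) _ h0mem]
      have hb : ∀ l, l < ω → 0 ≤ w l i ∧ w l i ≤ 1 := fun l hl => (hw l hl).1.2 i
      have hprod1 : (∏ l ∈ (Finset.range J).erase 0, w l i) ≤ 1 := by
        apply Finset.prod_le_one
        · intro l hl
          exact (hb l (by
            have := Finset.mem_range.mp (Finset.mem_of_mem_erase hl); omega)).1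
        · intro l hl
          exact (hb l (by
            have := Finset.mem_range.mp (Finset.mem_of_mem_erase hl); omega)).2
      have hprod0 : 0 ≤ ∏ l ∈ (Finset.range J).erase 0, w l i := by
        apply Finset.prod_nonneg
        intro l hl
        exact (hb l (by
          have := Finset.mem_range.mp (Finset.mem_of_mem_erase hl); omega)).1
      have h0i := hb 0 (by omega)
      nlinarith [h0i.1]
    calc (∑ i, (∏ l ∈ Finset.range J, w l) i) ≤ ∑ i, w 0 i :=
          Finset.sum_le_sum (fun i _ => hpt i)
      _ = (k : ℝ) := (hw 0 (by omega)).1.1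
  have hG1 : ∀ (M : Finset (Fin n)) (J : ℕ), 1 ≤ J → J ≤ ω →
      n2 (A.mulVec (fun i => restr η M i * (∏ l ∈ Finset.range J, w l) i)) ≤ G1 := by
    intro M J h1 h2
    apply poly_bound A (restr η M)
    · intro T hT
      have heq : (fun i => restr η M i * (if i ∈ T then (1:ℝ) else 0)) = restr η (M ∩ T) := by
        funext i
        simp only [restr, Finset.mem_inter]
        by_cases hM : i ∈ M <;> by_cases hTi : i ∈ T <;> simp [hM, hTi]
      rw [heq]
      have hsp : Sparse k (restr η (M ∩ T)) := by
        apply sparse_restr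
        exact le_trans (Finset.card_le_card Finset.inter_subset_right) hT
      calc n2 (A.mulVec (restr η (M ∩ T))) ≤ s1 * n2 (restr η (M ∩ T)) :=
            sat_upper A hsatk hδk0 hsp
        _ ≤ s1 * (δ3k * P + Q) := by
            apply mul_le_mul_of_nonneg_left _ hs10
            exact hB3 _ (le_trans (Finset.card_le_card Finset.inter_subset_right) hT)
        _ = G1 := hG1d.symm
    · intro i; exact hW01 J h2 i
    · exact hWsum J h1 h2
  set z : ℕ → (Fin n → ℝ) := fun j => up * ∏ l ∈ Finset.range j, w l with hzd
  set r : ℕ → ℝ := fun j => n2 (y - A.mulVec (z j)) with hrd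
  have hSind : InP k (fun i => if i ∈ S then (1:ℝ) else 0) := by
    constructor
    · rw [Finset.sum_ite_mem, Finset.univ_inter, Finset.sum_const, hS.1]
      simp
    · intro i
      by_cases h : i ∈ S <;> simp [h]
  have hzSc : ∀ j : ℕ, restr (z j) Sᶜ = fun i => restr η Sᶜ i * (∏ l ∈ Finset.range j, w l) i := by
    intro j
    funext i
    simp only [restr, Finset.mem_compl, hzd, Pi.mul_apply]
    by_cases h : i ∈ S
    · simp [h]
    · simp only [h, not_false_iff, if_true]
      have hxSi : xS i = 0 := by rw [hxS]; simp [restr, h]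
      have : up i = η i := by rw [hηd]; simp [Pi.sub_apply, hxSi]
      rw [this]
  have hstep : ∀ j, j < ω → r (j+1) ≤ r j + n2 (A.mulVec (restr (z j) Sᶜ)) := by
    intro j hj
    have hscm := (hw j hj).2 (fun i => if i ∈ S then (1:ℝ) else 0) hSind
    have hlhs : up * (∏ l ∈ Finset.range j, w l) * w j = z (j+1) := by
      simp only [hzd]
      rw [Finset.prod_range_succ, mul_assoc]
    have hrhs : up * (∏ l ∈ Finset.range j, w l) * (fun i => if i ∈ S then (1:ℝ) else 0)
        = restr (z j) S := by
      funext i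
      simp only [Pi.mul_apply, restr, hzd]
      by_cases h : i ∈ S <;> simp [h]
    rw [hlhs, hrhs] at hscm
    refine le_trans hscm ?_
    have h1 : A.mulVec (z j) = A.mulVec (restr (z j) S) + A.mulVec (restr (z j) Sᶜ) := by
      conv_lhs => rw [← restr_add_compl (z j) S]
      rw [Matrix.mulVec_add]
    have h2 : y - A.mulVec (restr (z j) S)
        = (y - A.mulVec (z j)) + A.mulVec (restr (z j) Sᶜ) := by
      rw [h1]; abel
    rw [h2]
    exact n2_add_le _ _
  have hstep' : ∀ j, 1 ≤ j → j < ω → r (j+1) ≤ r j + G1 := by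
    intro j h1 h2
    refine le_trans (hstep j h2) (add_le_add_right ?_ _)
    rw [hzSc j]
    exact hG1 Sᶜ j h1 (le_of_lt h2)
  have hr1 : r 1 ≤ s1 * (δ2k * P + Q) + R := by
    have hscm := (hw 0 (by omega)).2 (fun i => if i ∈ S then (1:ℝ) else 0) hSind
    have hlhs : up * (∏ l ∈ Finset.range 0, w l) * w 0 = z 1 := by
      simp only [hzd]
      rw [Finset.prod_range_zero, Finset.prod_range_one, mul_one]
    have hrhs : up * (∏ l ∈ Finset.range 0, w l) * (fun i => if i ∈ S then (1:ℝ) else 0)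
        = xS + restr η S := by
      funext i
      simp only [Pi.mul_apply, Pi.add_apply, Finset.prod_range_zero, Pi.one_apply, mul_one,
        restr, hηd, Pi.sub_apply]
      by_cases h : i ∈ S
      · simp only [h, if_true, mul_one]
        have hxSi : xS i = xS i := rfl
        ring
      · simp only [h, if_false, mul_zero]
        have hxSi : xS i = 0 := by rw [hxS]; simp [restr, h]
        rw [hxSi]; ring
    rw [hlhs, hrhs] at hscm
    have h2 : y - A.mulVec (xS + restr η S) = ν' - A.mulVec (restr η S) := by
      rw [Matrix.mulVec_add, hyS]; abel
    rw [h2] at hscm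
    have h3 : n2 (ν' - A.mulVec (restr η S)) ≤ R + n2 (A.mulVec (restr η S)) := by
      rw [sub_eq_add_neg]
      refine le_trans (n2_add_le _ _) ?_
      rw [n2_neg]
    have h4 : n2 (A.mulVec (restr η S)) ≤ s1 * (δ2k * P + Q) := by
      have hsp : Sparse k (restr η S) := sparse_restr _ (le_of_eq hS.1)
      calc n2 (A.mulVec (restr η S)) ≤ s1 * n2 (restr η S) := sat_upper A hsatk hδk0 hsp
        _ ≤ s1 * (δ2k * P + Q) := mul_le_mul_of_nonneg_left hB2S hs10
    calc r 1 ≤ n2 (ν' - A.mulVec (restr η S)) := hscm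
      _ ≤ R + n2 (A.mulVec (restr η S)) := h3
      _ ≤ R + s1 * (δ2k * P + Q) := by linarith
      _ = s1 * (δ2k * P + Q) + R := by ring
  have hrω : r ω ≤ s1 * (δ2k * P + Q) + R + (c - 1) * G1 := by
    have haux : ∀ t : ℕ, 1 + t ≤ ω → r (1+t) ≤ r 1 + (t:ℝ) * G1 := by
      intro t
      induction t with
      | zero => intro _; simp
      | succ t iht =>
        intro hle
        have h1 := iht (by omega)
        have h2 := hstep' (1+t) (by omega) (by omega)
        have h3 : (1 + (t+1)) = (1+t) + 1 := by omega
        rw [h3]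
        push_cast
        push_cast at h1
        linarith
    have h := haux (ω - 1) (by omega)
    rw [show 1 + (ω-1) = ω from by omega] at h
    have hcast : ((ω - 1 : ℕ) : ℝ) = c - 1 := by
      rw [Nat.cast_sub hω, hc]; simp
    rw [hcast] at h
    linarith
  set T' : Finset (Fin n) := supp xq with hT'd
  have hT'k : T'.card ≤ k := hxq.1
  have hxqeq : xq = restr (z ω) T' := by
    have hzω : z ω = up * ∏ l ∈ Finset.range ω, w l := rfl
    have hxqoff : ∀ i, i ∉ T' → xq i = 0 := by
      intro i hi
      rw [hT'd] at hi
      simp only [supp, Finset.mem_filter, Finset.mem_univ, true_and, not_not] at hi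
      exact hi
    have hd'sparse : Sparse k (restr (z ω) T') := sparse_restr _ hT'k
    have hle : n2 (z ω - xq) ≤ n2 (z ω - restr (z ω) T') := by
      rw [hzω]
      exact hxq.2 _ hd'sparse
    have hnsq : nsq (z ω - xq) ≤ nsq (z ω - restr (z ω) T') := by
      rw [← n2_sq, ← n2_sq]
      exact pow_le_pow_left₀ (n2_nonneg _) hle 2
    have h2 : nsq (z ω - restr (z ω) T') = ∑ i ∈ T'ᶜ, (z ω i)^2 := by
      rw [sub_restr_eq, nsq_restr]
    have h1 : nsq (z ω - xq)
        = (∑ i ∈ T', (z ω i - xq i)^2) + ∑ i ∈ T'ᶜ, (z ω i)^2 := by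
      unfold nsq
      rw [← Finset.sum_add_sum_compl T' (fun i => ((z ω - xq) i)^2)]
      have ha : ∑ i ∈ T', ((z ω - xq) i)^2 = ∑ i ∈ T', (z ω i - xq i)^2 :=
        Finset.sum_congr rfl (fun i _ => by rw [Pi.sub_apply])
      have hb : ∑ i ∈ T'ᶜ, ((z ω - xq) i)^2 = ∑ i ∈ T'ᶜ, (z ω i)^2 :=
        Finset.sum_congr rfl (fun i hi => by
          rw [Pi.sub_apply, hxqoff i (Finset.mem_compl.mp hi), sub_zero])
      rw [ha, hb]
    have hzero : ∑ i ∈ T', (z ω i - xq i)^2 = 0 := by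
      have hge : 0 ≤ ∑ i ∈ T', (z ω i - xq i)^2 :=
        Finset.sum_nonneg (fun i _ => sq_nonneg _)
      rw [h1, h2] at hnsq
      linarith
    have hall := (Finset.sum_eq_zero_iff_of_nonneg (fun i _ => sq_nonneg _)).mp hzero
    funext i
    by_cases hi : i ∈ T'
    · have := hall i hi
      have hzi : z ω i - xq i = 0 := by
        exact pow_eq_zero_iff (by norm_num) |>.mp this
      simp only [restr, hi, if_true]
      linarith [hzi]
    · rw [hxqoff i hi]
      simp [restr, hi]
  have hexch : n2 (restr (z ω) (S \ T')) ≤ n2 (restr (z ω) (T' \ S)) := by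
    have hzω : z ω = up * ∏ l ∈ Finset.range ω, w l := rfl
    have hSsp : Sparse k (restr (z ω) S) := sparse_restr _ (le_of_eq hS.1)
    have hle : n2 (z ω - xq) ≤ n2 (z ω - restr (z ω) S) := by
      rw [hzω]; exact hxq.2 _ hSsp
    rw [hxqeq, sub_restr_eq, sub_restr_eq] at hle
    have hnsq : (∑ i ∈ T'ᶜ, (z ω i)^2) ≤ ∑ i ∈ Sᶜ, (z ω i)^2 := by
      have := pow_le_pow_left₀ (n2_nonneg _) hle 2
      rw [n2_sq, n2_sq, nsq_restr, nsq_restr] at this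
      exact this
    have htot1 := Finset.sum_add_sum_compl T' (fun i => (z ω i)^2)
    have htot2 := Finset.sum_add_sum_compl S (fun i => (z ω i)^2)
    have hST : (∑ i ∈ S, (z ω i)^2) ≤ ∑ i ∈ T', (z ω i)^2 := by linarith
    have hdS : (∑ i ∈ S \ T', (z ω i)^2) + ∑ i ∈ S ∩ T', (z ω i)^2
        = ∑ i ∈ S, (z ω i)^2 := by
      rw [← Finset.sum_sdiff (Finset.inter_subset_left : S ∩ T' ⊆ S)]
      rw [Finset.sdiff_inter_self_left]
    have hdT : (∑ i ∈ T' \ S, (z ω i)^2) + ∑ i ∈ T' ∩ S, (z ω i)^2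
        = ∑ i ∈ T', (z ω i)^2 := by
      rw [← Finset.sum_sdiff (Finset.inter_subset_left : T' ∩ S ⊆ T')]
      rw [Finset.sdiff_inter_self_left]
    have hIC : (∑ i ∈ S ∩ T', (z ω i)^2) = ∑ i ∈ T' ∩ S, (z ω i)^2 := by
      rw [Finset.inter_comm]
    unfold n2
    apply Real.sqrt_le_sqrt
    rw [nsq_restr, nsq_restr]
    linarith
  have hW01abs : ∀ i, |(∏ l ∈ Finset.range ω, w l) i| ≤ 1 := by
    intro i
    have := hW01 ω le_rfl i
    rw [abs_of_nonneg this.1]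
    exact this.2
  have hTSb : n2 (restr (z ω) (T' \ S)) ≤ δ3k * P + Q := by
    refine le_trans (n2_mono (y := restr η (T' \ S)) ?_) (hB3 (T' \ S) ?_)
    · intro i
      simp only [restr]
      by_cases h : i ∈ T' \ S
      · simp only [h, if_true]
        have hiS : i ∉ S := (Finset.mem_sdiff.mp h).2
        have hxSi : xS i = 0 := by rw [hxS]; simp [restr, hiS]
        have hzi : z ω i = η i * (∏ l ∈ Finset.range ω, w l) i := by
          simp only [hzd, Pi.mul_apply, hηd, Pi.sub_apply, hxSi, sub_zero]
        rw [hzi, abs_mul]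
        calc |η i| * |(∏ l ∈ Finset.range ω, w l) i| ≤ |η i| * 1 :=
              mul_le_mul_of_nonneg_left (hW01abs i) (abs_nonneg _)
          _ = |η i| := mul_one _
      · simp [h]
    · exact le_trans (Finset.card_le_card Finset.sdiff_subset) hT'k
  set D : Finset (Fin n) := S ∪ T' with hDd
  have hDcard : D.card ≤ 2 * k := by
    calc D.card ≤ S.card + T'.card := Finset.card_union_le _ _
      _ ≤ 2 * k := by rw [hS.1]; omega
  have hzDc : restr (z ω - xS) Dᶜ = fun i => restr η Dᶜ i * (∏ l ∈ Finset.range ω, w l) i := by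
    funext i
    simp only [restr, Finset.mem_compl, Pi.sub_apply]
    by_cases h : i ∈ D
    · simp [h]
    · simp only [h, not_false_iff, if_true]
      have hiS : i ∉ S := fun hh => h (Finset.mem_union_left _ hh)
      have hxSi : xS i = 0 := by rw [hxS]; simp [restr, hiS]
      have hzi : z ω i = η i * (∏ l ∈ Finset.range ω, w l) i := by
        simp only [hzd, Pi.mul_apply, hηd, Pi.sub_apply, hxSi, sub_zero]
      rw [hzi, hxSi, sub_zero]
  have hbeta : n2 (A.mulVec (restr (z ω - xS) D)) ≤ r ω + R + G1 := by
    have hrc : restr (z ω - xS) D = (z ω - xS) - restr (z ω - xS) Dᶜ := by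
      rw [eq_sub_iff_add_eq, restr_add_compl]
    have hAxS : A.mulVec xS = y - ν' := by rw [hyS]; abel
    have hsplitD : A.mulVec (restr (z ω - xS) D)
        = -(y - A.mulVec (z ω)) + ν' + -(A.mulVec (restr (z ω - xS) Dᶜ)) := by
      rw [hrc, Matrix.mulVec_sub, Matrix.mulVec_sub, hAxS]
      abel
    rw [hsplitD]
    refine le_trans (n2_add_le _ _) ?_
    have h1 : n2 (-(y - A.mulVec (z ω)) + ν')
        ≤ n2 (-(y - A.mulVec (z ω))) + n2 ν' := n2_add_le _ _
    have h2 : n2 (-(y - A.mulVec (z ω))) = r ω := by rw [n2_neg]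
    have h3 : n2 (-(A.mulVec (restr (z ω - xS) Dᶜ))) ≤ G1 := by
      rw [n2_neg, hzDc]
      exact hG1 Dᶜ ω hω le_rfl
    have hrr : n2 (y - A.mulVec (z ω)) = r ω := rfl
    linarith
  have hN1 : s2 * n2 (restr (z ω - xS) D) ≤ r ω + R + G1 := by
    refine le_trans ?_ hbeta
    exact sat_lower A hsat2 (sparse_restr _ hDcard)
  have hN : n2 (xq - xS) ≤ (δ3k * P + Q) + n2 (restr (z ω - xS) D) := by
    have hdecomp : xq - xS = -(restr (z ω) (S \ T')) + restr (z ω - xS) D := by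
      rw [hxqeq]
      funext i
      simp only [Pi.sub_apply, Pi.add_apply, Pi.neg_apply, restr]
      by_cases hiT : i ∈ T'
      · have hiD : i ∈ D := Finset.mem_union_right _ hiT
        have hiSd : i ∉ S \ T' := by simp [Finset.mem_sdiff, hiT]
        simp only [hiT, if_true, hiD, hiSd, if_false]
        ring
      · by_cases hiS : i ∈ S
        · have hiD : i ∈ D := Finset.mem_union_left _ hiS
          have hiSd : i ∈ S \ T' := Finset.mem_sdiff.mpr ⟨hiS, hiT⟩
          simp only [hiT, if_false, hiD, hiSd, if_true]
          ring
        · have hiD : i ∉ D := by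
            rw [hDd]; simp [hiS, hiT]
          have hxSi : xS i = 0 := by rw [hxS]; simp [restr, hiS]
          have hiSd : i ∉ S \ T' := by simp [Finset.mem_sdiff, hiS]
          simp only [hiT, if_false, hiD, hiSd, hxSi]
          ring
    rw [hdecomp]
    refine le_trans (n2_add_le _ _) ?_
    apply add_le_add _ le_rfl
    rw [n2_neg]
    exact le_trans hexch hTSb
  have htotal : n2 (xq - xS)
      ≤ (s1 * ((δ2k + c * δ3k) * P + (c + 1) * Q) + 2 * R) / s2 + (δ3k * P + Q) := by
    have hnum : r ω + R + G1 ≤ s1 * ((δ2k + c * δ3k) * P + (c + 1) * Q) + 2 * R := by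
      calc r ω + R + G1 ≤ (s1 * (δ2k * P + Q) + R + (c - 1) * G1) + R + G1 := by linarith
        _ = s1 * ((δ2k + c * δ3k) * P + (c + 1) * Q) + 2 * R := by rw [hG1d]; ring
    have hdiv : n2 (restr (z ω - xS) D)
        ≤ (s1 * ((δ2k + c * δ3k) * P + (c + 1) * Q) + 2 * R) / s2 := by
      rw [le_div_iff₀ hs2pos]
      calc n2 (restr (z ω - xS) D) * s2 = s2 * n2 (restr (z ω - xS) D) := mul_comm _ _
        _ ≤ r ω + R + G1 := hN1
        _ ≤ _ := hnum
    linarith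
  -- constants comparison
  set denom : ℝ := 2 * c * δ3k + δ2k with hdenom
  have hden : 0 < denom := by nlinarith
  set α : ℝ := 2 * δ3k / denom with hα
  have hα0 : 0 ≤ α := by positivity
  have h1mα : 0 < 1 - α := by
    have : α < 1 := by
      rw [hα, div_lt_one hden]
      nlinarith
    linarith
  have hκ : Real.sqrt ((1 + δk) / (1 - δ2k)) = s1 / s2 := Real.sqrt_div (by linarith) _
  have hκ0 : 0 ≤ s1 / s2 := div_nonneg hs10 (le_of_lt hs2pos)
  have hQcoef : (c + 1) ≤ (2 * c - 1) / (1 - α) := by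
    rw [le_div_iff₀ h1mα]
    have h1α : 1 - α = (denom - 2 * δ3k) / denom := by
      rw [hα]; field_simp
    have key : (c + 1) * (denom - 2 * δ3k) ≤ (2 * c - 1) * denom := by
      rw [hdenom]
      rcases le_or_gt c 2 with hc2 | hc2
      · nlinarith [mul_nonneg (mul_nonneg hδ3k0 (by linarith : (0:ℝ) ≤ c))
          (by linarith : (0:ℝ) ≤ 2 * c - 1),
          mul_nonneg (by linarith : (0:ℝ) ≤ δ3k - δ2k) (by linarith : (0:ℝ) ≤ 2 - c)]
      · nlinarith [mul_nonneg hδ3k0 (by nlinarith : (0:ℝ) ≤ 2 * c ^ 2 - 2 * c + 2),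
          mul_nonneg hδ2k0 (by linarith : (0:ℝ) ≤ c - 2)]
    rw [h1α, ← mul_div_assoc, div_le_iff₀ hden]
    calc (c + 1) * (denom - 2 * δ3k) ≤ (2 * c - 1) * denom := key
      _ = _ := by ring
  have hRcoef : 2 / s2 ≤ 2 / ((1 - α) * s2) := by
    have hd2 : 0 < (1 - α) * s2 := mul_pos h1mα hs2pos
    rw [div_le_div_iff₀ hs2pos hd2]
    have hle : (1 - α) * s2 ≤ 1 * s2 :=
      mul_le_mul_of_nonneg_right (by linarith only [hα0]) (le_of_lt hs2pos)
    linarith only [hle]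
  constructor
  · rw [hκ]
    refine le_trans htotal ?_
    have e1 : (s1 * ((δ2k + c * δ3k) * P + (c + 1) * Q) + 2 * R) / s2 + (δ3k * P + Q)
        = ((s1 / s2) * (δ2k + c * δ3k) + δ3k) * P + ((s1 / s2) * (c + 1) + 1) * Q
          + (2 / s2) * R := by
      field_simp
      ring
    rw [e1]
    refine add_le_add (add_le_add ?_ ?_) ?_
    · apply mul_le_mul_of_nonneg_right _ hP0
      apply add_le_add_left
      rw [mul_comm]
      apply mul_le_mul_of_nonneg_right _ hκ0
      nlinarith [hδ3k0, hc1]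
    · apply mul_le_mul_of_nonneg_right _ hQ0
      apply add_le_add_left
      rw [mul_comm]
      exact mul_le_mul_of_nonneg_right hQcoef hκ0
    · exact mul_le_mul_of_nonneg_right hRcoef hR0
  · intro h3lt hsmall
    have hsq : Real.sqrt ((1 + δk) / (1 - δ2k)) ≤ Real.sqrt ((1 + δ3k) / (1 - δ3k)) := by
      apply Real.sqrt_le_sqrt
      apply div_le_div₀ (by linarith) (by linarith) (by linarith) (by linarith)
    have h0 : 0 ≤ Real.sqrt ((1 + δk) / (1 - δ2k)) := Real.sqrt_nonneg _
    have hcoef : δ2k + 2 * c * δ3k ≤ (2 * c + 1) * δ3k := by nlinarith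
    have hmm : (δ2k + 2 * c * δ3k) * Real.sqrt ((1 + δk) / (1 - δ2k))
        ≤ (2 * c + 1) * δ3k * Real.sqrt ((1 + δ3k) / (1 - δ3k)) := by
      apply mul_le_mul hcoef hsq h0
      nlinarith [hδ3k0, hc1]
    linarith
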